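/- The Type I-B graph G(p,s) contains no cycle of length 4; equivalently, any two distinct variable nodes of G(p,s) have at most one common constraint-node neighbor. Consequently the girth of G(p,s) is at least 6. -/

import Mathlib

open scoped Classical

namespace TypeIB

/-- The nonzero elements of `F`. -/
abbrev Fstar (F : Type*) [Field F] := {j : F // j ≠ 0}

/-- Variable nodes of the Type I-B graph: the root `r`, the nodes `v_y` (y ∈ F) and the
nodes `(i,j)` with `i ∈ F`, `j ∈ F \ {0}`. -/
abbrev VN (F : Type*) [Field F] := Unit ⊕ (F ⊕ (F × Fstar F))

/-- Constraint nodes of the Type I-B graph: the root `r'`, the nodes `c_i` (i ∈ F) and the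
nodes `(i,j)'` with `i ∈ F`, `j ∈ F \ {0}`. -/
abbrev CN (F : Type*) [Field F] := Unit ⊕ (F ⊕ (F × Fstar F))

/-- Adjacency of the Type I-B graph `G(p,s)`:
`r ~ c_i` for every `i`; `c_i ~ (i,j)` for every `j ≠ 0`; `r' ~ v_y` for every `y`;
`v_y ~ (y,j)'` for every `j ≠ 0`; and `(i,j) ~ (k, j + i·k)'` whenever `j + i·k ≠ 0`,
except that the edges `(0,j) ~ (0,j)'` are omitted. -/
def adj (F : Type*) [Field F] : VN F → CN F → Prop
  | Sum.inl _, Sum.inl _ => False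
  | Sum.inl _, Sum.inr (Sum.inl _) => True              -- r ~ c_i
  | Sum.inl _, Sum.inr (Sum.inr _) => False
  | Sum.inr (Sum.inl _), Sum.inl _ => True              -- v_y ~ r'
  | Sum.inr (Sum.inl _), Sum.inr (Sum.inl _) => False
  | Sum.inr (Sum.inl y), Sum.inr (Sum.inr (a, _)) => a = y   -- v_y ~ (y,b)'
  | Sum.inr (Sum.inr _), Sum.inl _ => False
  | Sum.inr (Sum.inr (i, _)), Sum.inr (Sum.inl k) => k = i   -- c_i ~ (i,j)
  | Sum.inr (Sum.inr (i, j)), Sum.inr (Sum.inr (a, b)) =>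
      (b : F) = (j : F) + i * a ∧ ¬(i = 0 ∧ a = 0)

end TypeIB

/-- The simple graph on the disjoint union `V ⊕ C` associated to a bipartite adjacency
relation between variable nodes `V` and constraint nodes `C`. -/
def bip {V C : Type*} (adj : V → C → Prop) : SimpleGraph (V ⊕ C) where
  Adj x y :=
    (∃ v c, x = Sum.inl v ∧ y = Sum.inr c ∧ adj v c) ∨
    (∃ v c, x = Sum.inr c ∧ y = Sum.inl v ∧ adj v c)
  symm := by
    constructor
    rintro x y (⟨v, c, hx, hy, h⟩ | ⟨v, c, hx, hy, h⟩)
    · exact Or.inr ⟨v, c, hy, hx, h⟩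
    · exact Or.inl ⟨v, c, hy, hx, h⟩
  loopless := by
    constructor
    rintro x (⟨v, c, hx, hy, h⟩ | ⟨v, c, hx, hy, h⟩) <;> subst hx <;> simp at hy

lemma part1 {F : Type*} [Field F] : ∀ v₁ v₂ : TypeIB.VN F, v₁ ≠ v₂ →
      ∀ c₁ c₂ : TypeIB.CN F,
        TypeIB.adj F v₁ c₁ → TypeIB.adj F v₂ c₁ →
        TypeIB.adj F v₁ c₂ → TypeIB.adj F v₂ c₂ → c₁ = c₂ := by
  rintro (⟨⟩|y|⟨i,j⟩) (⟨⟩|y'|⟨i',j'⟩) hne (⟨⟩|k|⟨a,b⟩) (⟨⟩|k'|⟨a',b'⟩) h1 h2 h3 h4 <;>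
    simp_all [TypeIB.adj, Subtype.ext_iff, Prod.ext_iff]
  have key : (i - i') * (a - a') = 0 := by linear_combination h2.1 - h4.1
  have ha : a = a' := by
    rcases mul_eq_zero.mp key with h | h
    · have hi : i = i' := sub_eq_zero.mp h
      subst hi
      have : (j : F) = (j' : F) := by linear_combination h2.1
      exact absurd this (hne rfl)
    · exact sub_eq_zero.mp h
  exact ⟨ha, Or.inl ha⟩

def side {V C : Type*} : V ⊕ C → ZMod 2
  | Sum.inl _ => 0
  | Sum.inr _ => 1

lemma side_parity {V C : Type*} {adj : V → C → Prop} {x y : V ⊕ C}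
    (w : (bip adj).Walk x y) : side x + (w.length : ZMod 2) = side y := by
  induction w with
  | nil => simp
  | @cons a b c h w ih =>
    have hab : side a + 1 = side b := by
      rcases h with ⟨v, c', rfl, rfl, _⟩ | ⟨v, c', rfl, rfl, _⟩ <;> simp [side]
      decide
    rw [SimpleGraph.Walk.length_cons]
    push_cast
    rw [← ih, ← hab]
    ring

lemma closed_even {V C : Type*} {adj : V → C → Prop} {x : V ⊕ C}
    (w : (bip adj).Walk x x) : 2 ∣ w.length := by
  have h := side_parity w
  have h0 : (w.length : ZMod 2) = 0 := add_eq_left.mp h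
  exact (ZMod.natCast_eq_zero_iff _ _).mp h0

lemma no4 {V C : Type*} {adj : V → C → Prop}
    (H : ∀ v₁ v₂ : V, v₁ ≠ v₂ → ∀ c₁ c₂ : C,
      adj v₁ c₁ → adj v₂ c₁ → adj v₁ c₂ → adj v₂ c₂ → c₁ = c₂)
    {x : V ⊕ C} (w : (bip adj).Walk x x) (hc : w.IsCycle) : w.length ≠ 4 := by
  intro hlen
  cases w with
  | nil => simp at hlen
  | cons h1 w =>
  cases w with
  | nil => simp at hlen
  | cons h2 w =>
  cases w with
  | nil => simp at hlen
  | cons h3 w =>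
  cases w with
  | nil => simp at hlen
  | cons h4 w =>
  cases w with
  | cons h5 w => simp [SimpleGraph.Walk.length_cons] at hlen
  | nil =>
  rename_i b c d
  have hnd := hc.support_nodup
  rcases h1 with ⟨v1, c1, rfl, rfl, ha1⟩ | ⟨v1, c1, rfl, rfl, ha1⟩
  · rcases h2 with ⟨v2, c2, he, _, _⟩ | ⟨v2, c2, he, rfl, ha2⟩
    · simp at he
    · obtain rfl := Sum.inr.inj he
      rcases h3 with ⟨v3, c3, he3, rfl, ha3⟩ | ⟨v3, c3, he3, _, _⟩
      · obtain rfl := Sum.inl.inj he3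
        rcases h4 with ⟨v4, c4, he4, _, _⟩ | ⟨v4, c4, he4, he5, ha4⟩
        · simp at he4
        · obtain rfl := Sum.inr.inj he4
          obtain rfl := Sum.inl.inj he5
          replace hnd : [Sum.inr c1, Sum.inl v2, Sum.inr c3, Sum.inl v1].Nodup := hnd
          simp at hnd
          exact hnd.1 (H v2 v1 hnd.2 c1 c3 ha2 ha1 ha3 ha4)
      · simp at he3
  · rcases h2 with ⟨v2, c2, he, rfl, ha2⟩ | ⟨v2, c2, he, _, _⟩
    · obtain rfl := Sum.inl.inj he
      rcases h3 with ⟨v3, c3, he3, _, _⟩ | ⟨v3, c3, he3, rfl, ha3⟩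
      · simp at he3
      · obtain rfl := Sum.inr.inj he3
        rcases h4 with ⟨v4, c4, he4, he5, ha4⟩ | ⟨v4, c4, he4, _, _⟩
        · obtain rfl := Sum.inl.inj he4
          obtain rfl := Sum.inr.inj he5
          replace hnd : [Sum.inl v1, Sum.inr c2, Sum.inl v3, Sum.inr c1].Nodup := hnd
          simp at hnd
          exact hnd.2 (H v1 v3 hnd.1 c2 c1 ha2 ha3 ha1 ha4)
        · simp at he4
    · simp at he

theorem stmt_3 (p s : ℕ) (hp : p.Prime) (hs : 0 < s)
    (F : Type*) [Field F] [Fintype F] (hF : Fintype.card F = p ^ s) :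
    -- any two distinct variable nodes have at most one common constraint-node neighbour
    (∀ v₁ v₂ : TypeIB.VN F, v₁ ≠ v₂ →
      ∀ c₁ c₂ : TypeIB.CN F,
        TypeIB.adj F v₁ c₁ → TypeIB.adj F v₂ c₁ →
        TypeIB.adj F v₁ c₂ → TypeIB.adj F v₂ c₂ → c₁ = c₂) ∧
    -- consequently the girth of G(p,s) is at least 6
    (6 : ℕ∞) ≤ (bip (TypeIB.adj F)).egirth := by
  refine ⟨part1, ?_⟩
  rw [SimpleGraph.le_egirth]
  intro a w hw
  have h3 := hw.three_le_length
  have h2 := closed_even w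
  have h4 := no4 part1 w hw
  have h6 : 6 ≤ w.length := by omega
  exact_mod_cast h6
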